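/- If v ∈ C²(Ω) solves Δv = h(v) in Ω with h(s) = f(g(s))/√(a(g(s))), then u = g ∘ v ∈ C²(Ω) solves div(a(u)Du) = (a'(u)/2)|Du|² + f(u) in Ω; conversely if u ∈ C²(Ω) solves the quasi-linear equation, then v = g⁻¹ ∘ u solves Δv = h(v). Moreover v(x) → +∞ as d(x,∂Ω) → 0 if and only if u(x) → +∞ as d(x,∂Ω) → 0. -/

import Mathlib

open Filter Topology

-- key computational lemma
theorem key_lemma {N : ℕ} {Ω : Set (EuclideanSpace ℝ (Fin N))} (hΩ : IsOpen Ω)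
    {a g : ℝ → ℝ} (ha : ContDiff ℝ 1 a) {ν : ℝ} (hν : 0 < ν) (hab : ∀ s, ν ≤ a s)
    (hg : ∀ s, HasDerivAt g (1 / Real.sqrt (a (g s))) s)
    (pd : (EuclideanSpace ℝ (Fin N) → ℝ) → Fin N → EuclideanSpace ℝ (Fin N) → ℝ)
    (hpd : ∀ w i x, pd w i x = fderiv ℝ w x (EuclideanSpace.single i 1))
    {v : EuclideanSpace ℝ (Fin N) → ℝ} (hv : ContDiffOn ℝ 2 v Ω)
    {x : EuclideanSpace ℝ (Fin N)} (hx : x ∈ Ω) :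
    (∀ i, pd (g ∘ v) i x = 1 / Real.sqrt (a (g (v x))) * pd v i x) ∧
    (∑ i, pd (fun y => a ((g ∘ v) y) * pd (g ∘ v) i y) i x)
      = deriv a (g (v x)) / (2 * a (g (v x))) * (∑ i, (pd v i x) ^ 2)
        + Real.sqrt (a (g (v x))) * (∑ i, pd (pd v i) i x) := by
  have hA : ∀ t, 0 < a t := fun t => lt_of_lt_of_le hν (hab t)
  have hsq : ∀ t, 0 < Real.sqrt (a t) := fun t => Real.sqrt_pos.2 (hA t)
  have hvat : ∀ y ∈ Ω, ContDiffAt ℝ 2 v y := fun y hy =>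
    (hv y hy).contDiffAt (hΩ.mem_nhds hy)
  have hdv : ∀ y ∈ Ω, HasFDerivAt v (fderiv ℝ v y) y := fun y hy =>
    ((hvat y hy).differentiableAt (by norm_num)).hasFDerivAt
  have hgv : ∀ y ∈ Ω, HasFDerivAt (g ∘ v)
      ((1 / Real.sqrt (a (g (v y)))) • fderiv ℝ v y) y := fun y hy =>
    (hg (v y)).comp_hasFDerivAt y (hdv y hy)
  have hpdgv : ∀ y ∈ Ω, ∀ i, pd (g ∘ v) i y
      = 1 / Real.sqrt (a (g (v y))) * pd v i y := by
    intro y hy i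
    rw [hpd, hpd, (hgv y hy).fderiv]
    simp
  refine ⟨hpdgv x hx, ?_⟩
  -- second part
  set e : Fin N → EuclideanSpace ℝ (Fin N) := fun i => EuclideanSpace.single i 1 with he
  set A : ℝ := a (g (v x)) with hAdef
  have hA0 : 0 < A := hA _
  have hsA : 0 < Real.sqrt A := hsq _
  -- second derivative data
  have hf1 : ContDiffAt ℝ 1 (fderiv ℝ v) x := (hvat x hx).fderiv_right (by norm_num)
  set B : EuclideanSpace ℝ (Fin N) →L[ℝ] (EuclideanSpace ℝ (Fin N) →L[ℝ] ℝ) :=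
    fderiv ℝ (fderiv ℝ v) x with hB
  have hdf : HasFDerivAt (fderiv ℝ v) B x :=
    (hf1.differentiableAt (by norm_num)).hasFDerivAt
  have hq : ∀ i, HasFDerivAt (fun y => fderiv ℝ v y (e i))
      ((ContinuousLinearMap.apply ℝ ℝ (e i)).comp B) x := fun i =>
    ((ContinuousLinearMap.apply ℝ ℝ (e i)).hasFDerivAt).comp x hdf
  -- derivative of y ↦ √(a (g (v y)))
  have hda : HasDerivAt a (deriv a (g (v x))) (g (v x)) :=
    (ha.differentiable one_ne_zero (g (v x))).hasDerivAt
  have hds : HasDerivAt Real.sqrt (1 / (2 * Real.sqrt A)) A :=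
    Real.hasDerivAt_sqrt (ne_of_gt hA0)
  have hp : HasFDerivAt (fun y => Real.sqrt (a (g (v y))))
      ((1 / (2 * Real.sqrt A) * deriv a (g (v x))) •
        ((1 / Real.sqrt A) • fderiv ℝ v x)) x := by
    have h1 : HasDerivAt (fun t => Real.sqrt (a t))
        (1 / (2 * Real.sqrt A) * deriv a (g (v x))) (g (v x)) := hds.comp _ hda
    have := h1.comp_hasFDerivAt x (hgv x hx)
    exact this
  -- per-index identity
  have hterm : ∀ i, pd (fun y => a ((g ∘ v) y) * pd (g ∘ v) i y) i x
      = deriv a (g (v x)) / (2 * A) * (pd v i x) ^ 2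
        + Real.sqrt A * pd (pd v i) i x := by
    intro i
    have hev : (fun y => a ((g ∘ v) y) * pd (g ∘ v) i y)
        =ᶠ[𝓝 x] (fun y => Real.sqrt (a (g (v y))) * fderiv ℝ v y (e i)) := by
      filter_upwards [hΩ.mem_nhds hx] with y hy
      rw [hpdgv y hy i, hpd]
      have hAy : a (g (v y)) = Real.sqrt (a (g (v y))) * Real.sqrt (a (g (v y))) :=
        (Real.mul_self_sqrt (hA _).le).symm
      have hsy : Real.sqrt (a (g (v y))) ≠ 0 := ne_of_gt (hsq _)
      simp only [Function.comp_apply]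
      rw [← mul_assoc, mul_one_div, Real.div_sqrt]
    have hmul : HasFDerivAt (fun y => Real.sqrt (a (g (v y))) * fderiv ℝ v y (e i))
        (Real.sqrt A • ((ContinuousLinearMap.apply ℝ ℝ (e i)).comp B)
          + (fderiv ℝ v x (e i)) •
            ((1 / (2 * Real.sqrt A) * deriv a (g (v x))) •
              ((1 / Real.sqrt A) • fderiv ℝ v x))) x := hp.mul (hq i)
    have hpdvq : pd v i = fun y => fderiv ℝ v y (e i) := funext fun y => hpd v i y
    rw [hpd, hev.fderiv_eq, hmul.fderiv, hpdvq]
    simp only []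
    rw [hpd, (hq i).fderiv]
    simp only [ContinuousLinearMap.add_apply, ContinuousLinearMap.smul_apply,
      ContinuousLinearMap.coe_comp', Function.comp_apply, ContinuousLinearMap.apply_apply,
      smul_eq_mul]
    simp only [he]
    have hAs : Real.sqrt A * Real.sqrt A = A := Real.mul_self_sqrt hA0.le
    have hs0 : Real.sqrt A ≠ 0 := ne_of_gt hsA
    have hA0' : A ≠ 0 := ne_of_gt hA0
    field_simp
    linear_combination (-1 * deriv a (g (v x)) * (fderiv ℝ v x (EuclideanSpace.single i 1))^2) * hAs
  calc (∑ i, pd (fun y => a ((g ∘ v) y) * pd (g ∘ v) i y) i x)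
      = ∑ i, (deriv a (g (v x)) / (2 * A) * (pd v i x) ^ 2
        + Real.sqrt A * pd (pd v i) i x) := Finset.sum_congr rfl fun i _ => hterm i
    _ = _ := by rw [Finset.sum_add_distrib, ← Finset.mul_sum, ← Finset.mul_sum]

theorem stmt_11 {N : ℕ} (Ω : Set (EuclideanSpace ℝ (Fin N))) (hΩ : IsOpen Ω)
    (a f g ginv : ℝ → ℝ) (ha : ContDiff ℝ 1 a) (ν : ℝ) (hν : 0 < ν)
    (hab : ∀ s, ν ≤ a s) (hf : ContDiff ℝ 1 f)
    (hg : ∀ s, HasDerivAt g (1 / Real.sqrt (a (g s))) s) (hg0 : g 0 = 0)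
    (hgC2 : ContDiff ℝ 2 g) (hmono : StrictMono g)
    (hinv1 : ∀ s, ginv (g s) = s) (hinv2 : ∀ t, g (ginv t) = t)
    (pd : (EuclideanSpace ℝ (Fin N) → ℝ) → Fin N → EuclideanSpace ℝ (Fin N) → ℝ)
    (hpd : ∀ w i x, pd w i x = fderiv ℝ w x (EuclideanSpace.single i 1))
    (h : ℝ → ℝ) (hh : ∀ s, h s = f (g s) / Real.sqrt (a (g s))) :
    -- (i) v solves the semi-linear equation ⟹ u = g ∘ v solves the quasi-linear one
    (∀ v : EuclideanSpace ℝ (Fin N) → ℝ, ContDiffOn ℝ 2 v Ω →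
      (∀ x ∈ Ω, (∑ i, pd (pd v i) i x) = h (v x)) →
      ContDiffOn ℝ 2 (g ∘ v) Ω ∧
      ∀ x ∈ Ω, (∑ i, pd (fun y => a ((g ∘ v) y) * pd (g ∘ v) i y) i x) =
        deriv a ((g ∘ v) x) / 2 * (∑ i, (pd (g ∘ v) i x) ^ 2) + f ((g ∘ v) x)) ∧
    -- (ii) u solves the quasi-linear equation ⟹ v = g⁻¹ ∘ u solves the semi-linear one
    (∀ u : EuclideanSpace ℝ (Fin N) → ℝ, ContDiffOn ℝ 2 u Ω →
      (∀ x ∈ Ω, (∑ i, pd (fun y => a (u y) * pd u i y) i x) =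
        deriv a (u x) / 2 * (∑ i, (pd u i x) ^ 2) + f (u x)) →
      ContDiffOn ℝ 2 (ginv ∘ u) Ω ∧
      ∀ x ∈ Ω, (∑ i, pd (pd (ginv ∘ u) i) i x) = h ((ginv ∘ u) x)) ∧
    -- (iii) boundary blow-up of v is equivalent to boundary blow-up of u = g ∘ v
    (∀ v : EuclideanSpace ℝ (Fin N) → ℝ,
      ((∀ M : ℝ, ∃ δ > (0:ℝ), ∀ x ∈ Ω, Metric.infDist x (frontier Ω) < δ → M ≤ v x) ↔
       (∀ M : ℝ, ∃ δ > (0:ℝ), ∀ x ∈ Ω,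
          Metric.infDist x (frontier Ω) < δ → M ≤ g (v x)))) := by
  have hA : ∀ t, 0 < a t := fun t => lt_of_lt_of_le hν (hab t)
  have hsq : ∀ t, 0 < Real.sqrt (a t) := fun t => Real.sqrt_pos.2 (hA t)
  refine ⟨?_, ?_, ?_⟩
  · -- part (i)
    intro v hv hsemi
    refine ⟨hgC2.comp_contDiffOn hv, ?_⟩
    intro x hx
    obtain ⟨hL2, hL1⟩ := key_lemma hΩ ha hν hab hg pd hpd hv hx
    have hA0 : (0:ℝ) < a (g (v x)) := hA _
    have hs0 : Real.sqrt (a (g (v x))) ≠ 0 := ne_of_gt (hsq _)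
    have hsum : ∑ i, (pd (g ∘ v) i x) ^ 2
        = 1 / (a (g (v x))) * ∑ i, (pd v i x) ^ 2 := by
      simp only [hL2, mul_pow]
      rw [← Finset.mul_sum, div_pow, one_pow, Real.sq_sqrt hA0.le]
    rw [hL1, hsemi x hx, hh]
    simp only [Function.comp_apply]
    rw [hsum]
    field_simp
  · -- part (ii)
    intro u hu hquasi
    have hmono' : StrictMono ginv := by
      intro s t hst
      have := hmono.lt_iff_lt (a := ginv s) (b := ginv t)
      rw [hinv2, hinv2] at this
      exact this.1 hst
    have hsurj : Function.Surjective ginv := fun s => ⟨g s, hinv1 s⟩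
    have hcont : Continuous ginv := by
      have := (StrictMono.orderIsoOfSurjective ginv hmono' hsurj).continuous
      rwa [StrictMono.coe_orderIsoOfSurjective] at this
    have hder : ∀ t, HasDerivAt ginv (Real.sqrt (a t)) t := by
      intro t
      have h1 := hg (ginv t)
      rw [hinv2 t] at h1
      have h2 := HasDerivAt.of_local_left_inverse hcont.continuousAt h1
        (one_div_pos.2 (hsq t)).ne' (Filter.Eventually.of_forall hinv2)
      simpa [one_div, inv_inv] using h2
    have hginvC2 : ContDiff ℝ 2 ginv := by
      rw [show (2 : WithTop ℕ∞) = 1 + 1 from rfl, contDiff_succ_iff_deriv]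
      refine ⟨fun t => (hder t).differentiableAt, by simp, ?_⟩
      have hderiv : deriv ginv = fun t => Real.sqrt (a t) :=
        funext fun t => (hder t).deriv
      rw [hderiv]
      exact contDiff_iff_contDiffAt.2 fun t =>
        (Real.contDiffAt_sqrt (ne_of_gt (hA t))).comp t ha.contDiffAt
    have hvC2 : ContDiffOn ℝ 2 (ginv ∘ u) Ω := hginvC2.comp_contDiffOn hu
    refine ⟨hvC2, ?_⟩
    intro x hx
    obtain ⟨hL2, hL1⟩ := key_lemma hΩ ha hν hab hg pd hpd hvC2 hx
    have hq := hquasi x hx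
    have hueq : u = g ∘ (ginv ∘ u) := funext fun y => (hinv2 (u y)).symm
    rw [hueq] at hq
    rw [hL1] at hq
    have hA0 : (0:ℝ) < a (g ((ginv ∘ u) x)) := hA _
    have hs0 : Real.sqrt (a (g ((ginv ∘ u) x))) ≠ 0 := ne_of_gt (hsq _)
    have hsum : ∑ i, (pd (g ∘ (ginv ∘ u)) i x) ^ 2
        = 1 / (a (g ((ginv ∘ u) x))) * ∑ i, (pd (ginv ∘ u) i x) ^ 2 := by
      simp only [hL2, mul_pow]
      rw [← Finset.mul_sum, div_pow, one_pow, Real.sq_sqrt hA0.le]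
    rw [hsum] at hq
    simp only [Function.comp_apply] at hq ⊢
    rw [hh]
    have heq1 : deriv a (g (ginv (u x))) / (2 * a (g (ginv (u x))))
          * ∑ i, (pd (ginv ∘ u) i x) ^ 2
        = deriv a (g (ginv (u x))) / 2
          * (1 / a (g (ginv (u x))) * ∑ i, (pd (ginv ∘ u) i x) ^ 2) := by
      ring
    have heq2 : Real.sqrt (a (g (ginv (u x)))) * (∑ i, pd (pd (ginv ∘ u) i) i x)
        = f (g (ginv (u x))) := by linarith
    rw [eq_div_iff (ne_of_gt (hsq _))]
    linarith [heq2]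
  · -- part (iii)
    intro v
    constructor
    · intro H M
      obtain ⟨δ, hδ0, hδ⟩ := H (ginv M)
      refine ⟨δ, hδ0, fun x hx hd => ?_⟩
      have := hmono.monotone (hδ x hx hd)
      rwa [hinv2] at this
    · intro H M
      obtain ⟨δ, hδ0, hδ⟩ := H (g M)
      refine ⟨δ, hδ0, fun x hx hd => ?_⟩
      exact (hmono.le_iff_le).1 (hδ x hx hd)
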